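/- Let P ∈ ℕ with P ≥ 1 and let C_1, …, C_P be nonnegative reals. Let N_1, …, N_P be independent random variables on a probability space, with N_q Poisson distributed with mean C_q for each q. Define the random variable Σ = Σ_{q=1}^P q·N_q. Then ℙ(Σ = 0) = exp(−Σ_{q=1}^P C_q), and for every integer m ≥ 1, ℙ(Σ = m) = Σ_{q=1}^{min(m,P)} (q/m)·C_q·ℙ(Σ = m − q). -/

import Mathlib

open MeasureTheory ProbabilityTheory

namespace Stmt0Aux

/-- The set of configuration vectors with weighted sum `m`. -/
noncomputable def W (P m : ℕ) : Finset (ℕ → ℕ) :=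
  letI : DecidableEq (ℕ → ℕ) := Classical.decEq _
  (((Finset.Icc 1 P).pi fun _ => Finset.range (m + 1)).image
    (fun v n => if h : n ∈ Finset.Icc 1 P then v n h else 0)).filter
    (fun f => ∑ q ∈ Finset.Icc 1 P, q * f q = m)

lemma mem_W {P m : ℕ} {f : ℕ → ℕ} :
    f ∈ W P m ↔ (∀ n, n ∉ Finset.Icc 1 P → f n = 0) ∧ ∑ q ∈ Finset.Icc 1 P, q * f q = m := by
  classical
  constructor
  · intro hf
    rw [W] at hf
    rw [Finset.mem_filter, Finset.mem_image] at hf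
    obtain ⟨⟨v, hv, rfl⟩, hsum⟩ := hf
    exact ⟨fun n hn => dif_neg hn, hsum⟩
  · rintro ⟨hsupp, hsum⟩
    rw [W]
    rw [Finset.mem_filter, Finset.mem_image]
    refine ⟨⟨fun n _ => f n, ?_, ?_⟩, hsum⟩
    · rw [Finset.mem_pi]
      intro a ha
      rw [Finset.mem_range, Nat.lt_succ_iff]
      calc f a ≤ a * f a := Nat.le_mul_of_pos_left _ (by
              rw [Finset.mem_Icc] at ha; omega)
        _ ≤ ∑ q ∈ Finset.Icc 1 P, q * f q :=
              Finset.single_le_sum (f := fun q => q * f q) (fun i _ => Nat.zero_le _) ha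
        _ = m := hsum
    · funext n
      by_cases h : n ∈ Finset.Icc 1 P
      · simp [h]
      · simp [h, hsupp n h]

lemma W_zero (P : ℕ) : W P 0 = {fun _ => 0} := by
  ext f
  rw [mem_W, Finset.mem_singleton]
  constructor
  · rintro ⟨hsupp, hsum⟩
    funext n
    by_cases h : n ∈ Finset.Icc 1 P
    · have := (Finset.sum_eq_zero_iff.mp hsum) n h
      rw [Finset.mem_Icc] at h
      simp only [Nat.mul_eq_zero] at this
      omega
    · exact hsupp n h
  · rintro rfl
    exact ⟨fun _ _ => rfl, by simp⟩

/-- The Poisson pmf value. -/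
noncomputable def pp (c : ℝ) (k : ℕ) : ℝ := Real.exp (-c) * c ^ k / (Nat.factorial k)

lemma pp_succ (c : ℝ) (j : ℕ) : ((j + 1 : ℕ) : ℝ) * pp c (j + 1) = c * pp c j := by
  unfold pp
  rw [Nat.factorial_succ]
  have h1 : (Nat.factorial j : ℝ) ≠ 0 := Nat.cast_ne_zero.mpr (Nat.factorial_ne_zero _)
  have h2 : ((j : ℝ) + 1) ≠ 0 := by positivity
  push_cast
  field_simp
  ring

/-- Total mass of configurations with weighted sum `m`. -/
noncomputable def gg (P : ℕ) (c : ℕ → ℝ) (m : ℕ) : ℝ :=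
  ∑ f ∈ W P m, ∏ q ∈ Finset.Icc 1 P, pp (c q) (f q)

lemma gg_zero (P : ℕ) (c : ℕ → ℝ) :
    gg P c 0 = Real.exp (-(∑ q ∈ Finset.Icc 1 P, c q)) := by
  rw [gg, W_zero, Finset.sum_singleton]
  have : ∀ q ∈ Finset.Icc 1 P, pp (c q) 0 = Real.exp (-(c q)) := by
    intro q _; simp [pp]
  rw [Finset.prod_congr rfl this, ← Real.exp_sum]
  simp

lemma shift_sum {P m q0 : ℕ} (c : ℕ → ℝ) (hq0 : q0 ∈ Finset.Icc 1 P) (hq0m : q0 ≤ m) :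
    ∑ f ∈ W P m, (f q0 : ℝ) * ∏ q ∈ Finset.Icc 1 P, pp (c q) (f q)
      = c q0 * gg P c (m - q0) := by
  classical
  rw [gg, Finset.mul_sum]
  have hfilter : ∑ f ∈ (W P m).filter (fun f => 1 ≤ f q0),
      ((f q0 : ℝ) * ∏ q ∈ Finset.Icc 1 P, pp (c q) (f q))
      = ∑ f ∈ W P m, (f q0 : ℝ) * ∏ q ∈ Finset.Icc 1 P, pp (c q) (f q) :=
    Finset.sum_filter_of_ne (fun f _ hne => by
      by_contra h
      exact hne (by simp [Nat.eq_zero_of_not_pos h]))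
  rw [← hfilter]
  refine Finset.sum_nbij' (fun f => Function.update f q0 (f q0 - 1))
    (fun g => Function.update g q0 (g q0 + 1)) ?_ ?_ ?_ ?_ ?_
  · intro f hf
    rw [Finset.mem_filter, mem_W] at hf
    obtain ⟨⟨hsupp, hsum⟩, hpos⟩ := hf
    show Function.update f q0 (f q0 - 1) ∈ W P (m - q0)
    rw [mem_W]
    constructor
    · intro n hn
      have hne : n ≠ q0 := fun h => hn (h ▸ hq0)
      rw [Function.update_of_ne hne]
      exact hsupp n hn
    · have he : ∑ q ∈ (Finset.Icc 1 P).erase q0, q * Function.update f q0 (f q0 - 1) q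
          = ∑ q ∈ (Finset.Icc 1 P).erase q0, q * f q := by
        refine Finset.sum_congr rfl fun q hq => ?_
        rw [Function.update_of_ne (Finset.ne_of_mem_erase hq)]
      have h1 := Finset.add_sum_erase _
        (fun q => q * Function.update f q0 (f q0 - 1) q) hq0
      have h2 := Finset.add_sum_erase _ (fun q => q * f q) hq0
      rw [Function.update_self] at h1
      have hk : q0 * (f q0 - 1) + q0 = q0 * f q0 := by
        obtain ⟨k, hfq⟩ : ∃ k, f q0 = k + 1 := ⟨f q0 - 1, by omega⟩
        rw [hfq, Nat.add_sub_cancel, Nat.mul_succ]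
      omega
  · intro g hg
    rw [mem_W] at hg
    obtain ⟨hsupp, hsum⟩ := hg
    show Function.update g q0 (g q0 + 1) ∈ (W P m).filter (fun f => 1 ≤ f q0)
    rw [Finset.mem_filter, mem_W]
    refine ⟨⟨?_, ?_⟩, by simp⟩
    · intro n hn
      have hne : n ≠ q0 := fun h => hn (h ▸ hq0)
      rw [Function.update_of_ne hne]
      exact hsupp n hn
    · have he : ∑ q ∈ (Finset.Icc 1 P).erase q0, q * Function.update g q0 (g q0 + 1) q
          = ∑ q ∈ (Finset.Icc 1 P).erase q0, q * g q := by
        refine Finset.sum_congr rfl fun q hq => ?_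
        rw [Function.update_of_ne (Finset.ne_of_mem_erase hq)]
      have h1 := Finset.add_sum_erase _
        (fun q => q * Function.update g q0 (g q0 + 1) q) hq0
      have h2 := Finset.add_sum_erase _ (fun q => q * g q) hq0
      rw [Function.update_self] at h1
      have hk : q0 * (g q0 + 1) = q0 * g q0 + q0 := by ring
      omega
  · intro f hf
    rw [Finset.mem_filter] at hf
    funext n
    rcases eq_or_ne n q0 with rfl | h
    · rw [Function.update_self, Function.update_self]
      have := hf.2
      omega
    · rw [Function.update_of_ne h, Function.update_of_ne h]
  · intro g _
    funext n
    rcases eq_or_ne n q0 with rfl | h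
    · rw [Function.update_self, Function.update_self]
      omega
    · rw [Function.update_of_ne h, Function.update_of_ne h]
  · intro f hf
    rw [Finset.mem_filter] at hf
    obtain ⟨hfW, hpos⟩ := hf
    show (f q0 : ℝ) * ∏ q ∈ Finset.Icc 1 P, pp (c q) (f q)
      = c q0 * ∏ q ∈ Finset.Icc 1 P, pp (c q) (Function.update f q0 (f q0 - 1) q)
    rw [← Finset.mul_prod_erase _ (fun q => pp (c q) (f q)) hq0,
      ← Finset.mul_prod_erase _ (fun q => pp (c q) (Function.update f q0 (f q0 - 1) q)) hq0]
    have he : ∏ q ∈ (Finset.Icc 1 P).erase q0, pp (c q) (Function.update f q0 (f q0 - 1) q)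
        = ∏ q ∈ (Finset.Icc 1 P).erase q0, pp (c q) (f q) := by
      refine Finset.prod_congr rfl fun q hq => ?_
      rw [Function.update_of_ne (Finset.ne_of_mem_erase hq)]
    simp only [Function.update_self]
    rw [he]
    obtain ⟨j, hj⟩ : ∃ j, f q0 = j + 1 := ⟨f q0 - 1, by omega⟩
    rw [hj]
    simp only [Nat.add_sub_cancel]
    rw [← mul_assoc, ← mul_assoc]
    congr 1
    exact_mod_cast pp_succ (c q0) j

lemma vanish_sum {P m q0 : ℕ} (c : ℕ → ℝ) (hq0 : q0 ∈ Finset.Icc 1 P) (hq0m : m < q0) :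
    ∑ f ∈ W P m, (f q0 : ℝ) * ∏ q ∈ Finset.Icc 1 P, pp (c q) (f q) = 0 := by
  refine Finset.sum_eq_zero fun f hf => ?_
  rw [mem_W] at hf
  obtain ⟨hsupp, hsum⟩ := hf
  have h1 : q0 * f q0 ≤ m := hsum ▸ Finset.single_le_sum (f := fun q => q * f q) (fun i _ => Nat.zero_le _) hq0
  have h2 : f q0 = 0 := by nlinarith
  simp [h2]

lemma gg_rec (P m : ℕ) (c : ℕ → ℝ) :
    (m : ℝ) * gg P c m
      = ∑ q ∈ Finset.Icc 1 (min m P), (q : ℝ) * c q * gg P c (m - q) := by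
  have step1 : (m : ℝ) * gg P c m
      = ∑ q ∈ Finset.Icc 1 P, (q : ℝ) *
          ∑ f ∈ W P m, (f q : ℝ) * ∏ r ∈ Finset.Icc 1 P, pp (c r) (f r) := by
    rw [gg, Finset.mul_sum]
    have hcongr : ∀ f ∈ W P m, (m : ℝ) * ∏ q ∈ Finset.Icc 1 P, pp (c q) (f q)
        = ∑ q ∈ Finset.Icc 1 P,
            (q : ℝ) * ((f q : ℝ) * ∏ r ∈ Finset.Icc 1 P, pp (c r) (f r)) := by
      intro f hf
      rw [mem_W] at hf
      have hm : (m : ℝ) = ∑ q ∈ Finset.Icc 1 P, (q : ℝ) * (f q : ℝ) := by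
        rw [← hf.2]
        push_cast
        rfl
      rw [hm, Finset.sum_mul]
      refine Finset.sum_congr rfl fun q _ => by ring
    rw [Finset.sum_congr rfl hcongr, Finset.sum_comm]
    refine Finset.sum_congr rfl fun q _ => ?_
    rw [Finset.mul_sum]
  rw [step1]
  rw [← Finset.sum_subset (Finset.Icc_subset_Icc_right (min_le_right m P))
    (fun q hq hq' => ?_)]
  · refine Finset.sum_congr rfl fun q hq => ?_
    rw [Finset.mem_Icc] at hq
    rw [shift_sum c (Finset.mem_Icc.mpr ⟨hq.1, le_trans hq.2 (min_le_right m P)⟩)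
      (le_trans hq.2 (min_le_left m P))]
    ring
  · have hlt : m < q := by
      rw [Finset.mem_Icc] at hq hq'
      omega
    rw [vanish_sum c hq hlt, mul_zero]

end Stmt0Aux

open Stmt0Aux

/-- Theorem 1 of the paper, probabilistic form.
If `N 1, …, N P` are independent Poisson random variables with means `C 1, …, C P ≥ 0`
and `S = ∑_{q=1}^P q · N q`, then `ℙ(S = 0) = exp(−∑ C q)` and for `m ≥ 1`,
`ℙ(S = m) = ∑_{q=1}^{min(m,P)} (q/m) · C q · ℙ(S = m − q)`. -/
theorem stmt_0
    {Ω : Type*} [MeasureSpace Ω] [IsProbabilityMeasure (ℙ : Measure Ω)]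
    (P : ℕ) (hP : 1 ≤ P) (C : ℕ → NNReal)
    (N : ℕ → Ω → ℕ)
    (hmeas : ∀ q, Measurable (N q))
    (hindep : iIndepFun N ℙ)
    (hdist : ∀ q ∈ Finset.Icc 1 P, Measure.map (N q) ℙ = poissonMeasure (C q))
    (S : Ω → ℕ) (hS : ∀ ω, S ω = ∑ q ∈ Finset.Icc 1 P, q * N q ω) :
    (ℙ {ω | S ω = 0}).toReal = Real.exp (-(∑ q ∈ Finset.Icc 1 P, (C q : ℝ))) ∧
    ∀ m : ℕ, 1 ≤ m →
      (ℙ {ω | S ω = m}).toReal =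
        ∑ q ∈ Finset.Icc 1 (min m P),
          (q : ℝ) / (m : ℝ) * (C q : ℝ) * (ℙ {ω | S ω = m - q}).toReal := by
  have hsingle : ∀ q ∈ Finset.Icc 1 P, ∀ k : ℕ,
      ℙ (N q ⁻¹' {k}) = ENNReal.ofReal (pp ((C q : ℝ)) k) := by
    intro q hq k
    rw [← Measure.map_apply (hmeas q) (measurableSet_singleton k), hdist q hq,
      poissonMeasure_singleton]
    rfl
  have key : ∀ m : ℕ, (ℙ {ω | S ω = m}).toReal = gg P (fun q => (C q : ℝ)) m := by
    intro m
    have hdecomp : {ω | S ω = m} = ⋃ f ∈ W P m, ⋂ q ∈ Finset.Icc 1 P, N q ⁻¹' {f q} := by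
      ext ω
      simp only [Set.mem_setOf_eq, Set.mem_iUnion, Set.mem_iInter, Set.mem_preimage,
        Set.mem_singleton_iff]
      constructor
      · intro hω
        refine ⟨fun n => if n ∈ Finset.Icc 1 P then N n ω else 0, ?_, ?_⟩
        · rw [mem_W]
          refine ⟨fun n hn => if_neg hn, ?_⟩
          rw [← hω, hS]
          exact Finset.sum_congr rfl fun q hq => by rw [if_pos hq]
        · intro q hq
          simp [hq]
      · rintro ⟨f, hfW, hf⟩
        rw [mem_W] at hfW
        rw [hS, ← hfW.2]
        exact Finset.sum_congr rfl fun q hq => by rw [hf q hq]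
    have hmeasE : ∀ f : ℕ → ℕ, MeasurableSet (⋂ q ∈ Finset.Icc 1 P, N q ⁻¹' {f q}) :=
      fun f => MeasurableSet.biInter (Finset.Icc 1 P).countable_toSet
        (fun q _ => hmeas q (measurableSet_singleton _))
    have hdisj : (↑(W P m) : Set (ℕ → ℕ)).PairwiseDisjoint
        (fun f => ⋂ q ∈ Finset.Icc 1 P, N q ⁻¹' {f q}) := by
      intro f hf g hg hfg
      rw [Finset.mem_coe, mem_W] at hf hg
      refine Set.disjoint_left.mpr fun ω hωf hωg => ?_
      simp only [Set.mem_iInter, Set.mem_preimage, Set.mem_singleton_iff] at hωf hωg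
      apply hfg
      funext n
      by_cases h : n ∈ Finset.Icc 1 P
      · rw [← hωf n h, ← hωg n h]
      · rw [hf.1 n h, hg.1 n h]
    rw [hdecomp, measure_biUnion_finset hdisj fun f _ => hmeasE f]
    have hterm : ∀ f ∈ W P m, ℙ (⋂ q ∈ Finset.Icc 1 P, N q ⁻¹' {f q})
        = ∏ q ∈ Finset.Icc 1 P, ENNReal.ofReal (pp ((C q : ℝ)) (f q)) := by
      intro f _
      rw [hindep.meas_biInter (fun q hq => ⟨{f q}, measurableSet_singleton _, rfl⟩)]
      exact Finset.prod_congr rfl fun q hq => hsingle q hq (f q)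
    rw [Finset.sum_congr rfl hterm, ENNReal.toReal_sum
      (fun f _ => ENNReal.prod_ne_top fun q _ => ENNReal.ofReal_ne_top)]
    rw [gg]
    refine Finset.sum_congr rfl fun f _ => ?_
    rw [ENNReal.toReal_prod]
    refine Finset.prod_congr rfl fun q _ => ?_
    rw [ENNReal.toReal_ofReal]
    exact div_nonneg (mul_nonneg (Real.exp_pos _).le (pow_nonneg (C q).coe_nonneg _))
      (Nat.cast_nonneg _)
  constructor
  · rw [key 0, gg_zero]
  · intro m hm
    have hm0 : (m : ℝ) ≠ 0 := Nat.cast_ne_zero.mpr (by omega)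
    rw [key m]
    have hdiv : gg P (fun q => (C q : ℝ)) m
        = ∑ q ∈ Finset.Icc 1 (min m P),
            (q : ℝ) / (m : ℝ) * (C q : ℝ) * gg P (fun q => (C q : ℝ)) (m - q) := by
      refine mul_right_cancel₀ hm0 ?_
      rw [mul_comm, gg_rec P m (fun q => (C q : ℝ)), Finset.sum_mul]
      refine Finset.sum_congr rfl fun q _ => ?_
      field_simp
    rw [hdiv]
    refine Finset.sum_congr rfl fun q _ => ?_
    rw [key (m - q)]
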